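/- Let $N \geq 2$, $k = \cos(\pi/(2N))$, $f = (1-k)/(1+k)$, $l = 1/(1+k)$, and let $M_N = l \cdot A_{C_{4N}} + \begin{pmatrix} I_{2N} & f I_{2N} \\ f I_{2N} & I_{2N} \end{pmatrix}$, where $A_{C_{4N}}$ is the adjacency matrix of the cycle graph on $4N$ vertices. Then the matrix $M_N - \frac{l}{N} e_{4N} e_{4N}^T$ is positive semidefinite, where $e_{4N}$ is the all-ones vector of length $4N$. -/

import Mathlib

noncomputable def eAux (N : ℕ) (t : ℤ) : ℂ := Complex.exp (2*Real.pi*Complex.I*t/(4*N))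

noncomputable def muAux (N : ℕ) (l f : ℝ) (m : ℕ) : ℝ :=
  if m = 0 then 0 else 1 + l*(2*Real.cos (2*Real.pi*m/(4*N))) + f*(-1:ℝ)^m

noncomputable def SAux (N : ℕ) (t : ℤ) : ℝ := if (4*N:ℤ) ∣ t then (4*N:ℝ) else 0

lemma sum_exp_pow (n : ℕ) (hn : 0 < n) (t : ℤ) :
    ∑ m ∈ Finset.range n, Complex.exp (2 * Real.pi * Complex.I * t / n) ^ m
      = if (n:ℤ) ∣ t then (n:ℂ) else 0 := by
  have hn' : (n:ℂ) ≠ 0 := Nat.cast_ne_zero.2 hn.ne'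
  set z := Complex.exp (2 * Real.pi * Complex.I * t / n) with hz
  have hzn : z ^ n = 1 := by
    rw [hz, ← Complex.exp_nat_mul]
    have : (n:ℂ) * (2 * Real.pi * Complex.I * t / n) = t * (2 * Real.pi * Complex.I) := by
      field_simp
    rw [this, Complex.exp_int_mul_two_pi_mul_I]
  have hz1 : z = 1 ↔ (n:ℤ) ∣ t := by
    rw [hz, Complex.exp_eq_one_iff]
    constructor
    · rintro ⟨m, hm⟩
      refine ⟨m, ?_⟩
      have h2 : (2 * (Real.pi:ℂ) * Complex.I) ≠ 0 := by
        simp [Real.pi_ne_zero, Complex.I_ne_zero]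
      have : (t:ℂ) = (n:ℂ) * m := by
        have h3 : (t:ℂ) * (2 * (Real.pi:ℂ) * Complex.I)
            = ((n:ℂ) * m) * (2 * (Real.pi:ℂ) * Complex.I) := by
          field_simp at hm
          linear_combination (2 * (Real.pi:ℂ) * Complex.I) * hm
        exact mul_right_cancel₀ h2 h3
      exact_mod_cast this
    · rintro ⟨m, rfl⟩
      refine ⟨m, ?_⟩
      push_cast
      field_simp
  by_cases hd : (n:ℤ) ∣ t
  · simp [hd, hz1.2 hd]
  · rw [if_neg hd]
    have hzne : z ≠ 1 := fun h => hd (hz1.1 h)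
    rw [geom_sum_eq hzne, hzn]
    simp

lemma eAux_mul (N : ℕ) (s t : ℤ) : eAux N s * eAux N t = eAux N (s+t) := by
  rw [eAux, eAux, eAux, ← Complex.exp_add]
  congr 1
  push_cast
  ring

lemma eAux_pow (N : ℕ) (t : ℤ) (m : ℕ) : eAux N ((m:ℤ)*t) = (eAux N t)^m := by
  rw [eAux, eAux, ← Complex.exp_nat_mul]
  congr 1
  push_cast
  ring

lemma eAux_sum (N : ℕ) (hN : 2 ≤ N) (t : ℤ) :
    ∑ m ∈ Finset.range (4*N), eAux N ((m:ℤ)*t) = ((SAux N t : ℝ) : ℂ) := by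
  simp_rw [eAux_pow]
  rw [eAux, show (4*(N:ℂ)) = ((4*N : ℕ) : ℂ) by push_cast; ring,
    sum_exp_pow (4*N) (by omega) t, SAux,
    show ((4*N : ℕ) : ℤ) = 4*(N:ℤ) by push_cast; ring]
  split_ifs <;> push_cast <;> simp

lemma eAux_cos (N : ℕ) (hN : 2 ≤ N) (m : ℕ) :
    Complex.cos (2*(Real.pi:ℂ)*(m:ℂ)/(4*(N:ℂ))) = (eAux N m + eAux N (-(m:ℤ)))/2 := by
  have h1 : eAux N m = Complex.exp ((2*(Real.pi:ℂ)*(m:ℂ)/(4*(N:ℂ))) * Complex.I) := by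
    rw [eAux]; congr 1; push_cast; ring
  have h2 : eAux N (-(m:ℤ)) = Complex.exp (-(2*(Real.pi:ℂ)*(m:ℂ)/(4*(N:ℂ))) * Complex.I) := by
    rw [eAux]; congr 1; push_cast; ring
  rw [Complex.cos, h1, h2]

lemma eAux_neg_one (N : ℕ) (hN : 2 ≤ N) (m : ℕ) :
    ((-1:ℂ))^m = eAux N ((2*N*m : ℤ)) := by
  have : eAux N ((2*N*m : ℤ)) = Complex.exp ((m:ℂ) * (Real.pi * Complex.I)) := by
    rw [eAux]
    congr 1
    have hNne : ((N:ℂ)) ≠ 0 := Nat.cast_ne_zero.2 (by omega)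
    field_simp
    push_cast; ring
  rw [this, Complex.exp_nat_mul, Complex.exp_pi_mul_I]

lemma entryA (N : ℕ) (hN : 2 ≤ N) (l f : ℝ) (d : ℤ) :
    ∑ m ∈ Finset.range (4*N), ((muAux N l f m : ℝ) : ℂ) * eAux N ((m:ℤ) * d)
      = ((SAux N d + l * SAux N (d+1) + l * SAux N (d-1) + f * SAux N (d+2*N)
          - (1+2*l+f) : ℝ) : ℂ) := by
  have hpt : ∀ m ∈ Finset.range (4*N), ((muAux N l f m : ℝ) : ℂ) * eAux N ((m:ℤ) * d)
      = (eAux N ((m:ℤ)*d) + l * eAux N ((m:ℤ)*(d+1)) + l * eAux N ((m:ℤ)*(d-1))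
          + f * eAux N ((m:ℤ)*(d+2*N)))
        - (if m = 0 then (((1+2*l+f : ℝ)) : ℂ) else 0) := by
    intro m _
    by_cases hm : m = 0
    · subst hm
      have h0 : ∀ t : ℤ, eAux N ((0:ℕ) * t) = 1 := by
        intro t
        rw [eAux_pow]
        simp
      rw [muAux, if_pos rfl, if_pos rfl, h0, h0, h0, h0]
      push_cast
      ring
    · rw [muAux, if_neg hm, if_neg hm]
      push_cast
      rw [eAux_cos N hN m, eAux_neg_one N hN m]
      rw [show (m:ℤ)*(d+1) = m + (m:ℤ)*d by ring, ← eAux_mul]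
      rw [show (m:ℤ)*(d-1) = -(m:ℤ) + (m:ℤ)*d by ring, ← eAux_mul]
      rw [show (m:ℤ)*(d+2*N) = 2*(N:ℤ)*m + (m:ℤ)*d by ring, ← eAux_mul]
      push_cast
      ring
  rw [Finset.sum_congr rfl hpt, Finset.sum_sub_distrib]
  rw [Finset.sum_ite_eq' (Finset.range (4*N)) 0 (fun _ => (((1+2*l+f : ℝ)) : ℂ))]
  rw [if_pos (Finset.mem_range.2 (by omega))]
  simp only [Finset.sum_add_distrib, ← Finset.mul_sum]
  rw [eAux_sum N hN d, eAux_sum N hN (d+1), eAux_sum N hN (d-1), eAux_sum N hN (d+2*N)]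
  push_cast
  ring

lemma dvd_helper (n a b c : ℕ) (hn : 0 < n) (ha : a < n) (hb : b < n) (hc : c < n) :
    (n:ℤ) ∣ ((a:ℤ) - b + c) ↔ (a + c) % n = b := by
  constructor
  · rintro ⟨q, hq⟩
    have h1 : -(n:ℤ) < (n:ℤ) * q := by rw [← hq]; omega
    have h2 : (n:ℤ) * q < 2 * n := by rw [← hq]; omega
    have hn' : (0:ℤ) < (n:ℤ) := by exact_mod_cast hn
    have hq0 : 0 ≤ q := by nlinarith
    have hq1 : q ≤ 1 := by nlinarith
    interval_cases q
    · have : a + c = b := by omega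
      rw [this, Nat.mod_eq_of_lt hb]
    · have : a + c = b + n := by omega
      rw [this, Nat.add_mod_right, Nat.mod_eq_of_lt hb]
  · intro h
    rcases Nat.lt_or_ge (a + c) n with h1 | h1
    · rw [Nat.mod_eq_of_lt h1] at h
      exact ⟨0, by omega⟩
    · rw [Nat.mod_eq_sub_mod h1, Nat.mod_eq_of_lt (by omega)] at h
      exact ⟨1, by omega⟩

lemma mod2N_helper (N a : ℕ) (ha : a < 4*N) :
    a % (2*N) = if a < 2*N then a else a - 2*N := by
  by_cases h : a < 2*N
  · rw [if_pos h, Nat.mod_eq_of_lt h]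
  · rw [if_neg h, Nat.mod_eq_sub_mod (le_of_not_gt h), Nat.mod_eq_of_lt (by omega)]

lemma entryB (N : ℕ) (hN : 2 ≤ N) (l f : ℝ) (hlf : f = 2*l - 1) (j j' : Fin (4*N)) :
    SAux N ((j.val:ℤ) - (j'.val:ℤ)) + l * SAux N ((j.val:ℤ) - (j'.val:ℤ) + 1)
      + l * SAux N ((j.val:ℤ) - (j'.val:ℤ) - 1)
      + f * SAux N ((j.val:ℤ) - (j'.val:ℤ) + 2*N) - (1 + 2*l + f)
    = (4*N:ℝ) * (l * (if (j.val+1)%(4*N) = j'.val ∨ (j'.val+1)%(4*N) = j.val then 1 else 0)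
        + (if j = j' then 1 else if j.val % (2*N) = j'.val % (2*N) then f else 0) - l/N) := by
  subst hlf
  have hn : 0 < 4*N := by omega
  have ha : j.val < 4*N := j.isLt
  have hb : j'.val < 4*N := j'.isLt
  have hNR : ((N:ℝ)) ≠ 0 := Nat.cast_ne_zero.2 (by omega)
  set a := j.val with hav
  set b := j'.val with hbv
  -- divisibility characterizations
  have hcast : (4*(N:ℤ)) = ((4*N:ℕ):ℤ) := by push_cast; ring
  have hS0 : (4*(N:ℤ)) ∣ ((a:ℤ) - b) ↔ a = b := by
    rw [hcast, show ((a:ℤ) - b) = ((a:ℤ) - b + (0:ℕ)) by push_cast; ring,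
      dvd_helper (4*N) a b 0 hn ha hb hn, Nat.add_zero, Nat.mod_eq_of_lt ha]
  have hS1 : (4*(N:ℤ)) ∣ ((a:ℤ) - b + 1) ↔ (a+1) % (4*N) = b := by
    rw [hcast, show ((a:ℤ) - b + 1) = ((a:ℤ) - b + (1:ℕ)) by push_cast; ring,
      dvd_helper (4*N) a b 1 hn ha hb (by omega)]
  have hS2 : (4*(N:ℤ)) ∣ ((a:ℤ) - b - 1) ↔ (b+1) % (4*N) = a := by
    rw [hcast, show ((a:ℤ) - b - 1) = -((b:ℤ) - a + (1:ℕ)) by push_cast; ring, dvd_neg,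
      dvd_helper (4*N) b a 1 hn hb ha (by omega)]
  have hS3 : (4*(N:ℤ)) ∣ ((a:ℤ) - b + 2*N) ↔ (a+2*N) % (4*N) = b := by
    rw [hcast, show ((a:ℤ) - b + 2*N) = ((a:ℤ) - b + ((2*N:ℕ):ℤ)) by push_cast; ring,
      dvd_helper (4*N) a b (2*N) hn ha hb (by omega)]
  -- arithmetic characterizations of the mod conditions
  have hC1 : (a+1) % (4*N) = b ↔ (a + 1 = b ∨ (a = 4*N - 1 ∧ b = 0)) := by
    rcases Nat.lt_or_ge (a+1) (4*N) with h | h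
    · rw [Nat.mod_eq_of_lt h]; omega
    · have : a + 1 = 4*N := by omega
      rw [this, Nat.mod_self]; omega
  have hC2 : (b+1) % (4*N) = a ↔ (b + 1 = a ∨ (b = 4*N - 1 ∧ a = 0)) := by
    rcases Nat.lt_or_ge (b+1) (4*N) with h | h
    · rw [Nat.mod_eq_of_lt h]; omega
    · have : b + 1 = 4*N := by omega
      rw [this, Nat.mod_self]; omega
  have hC3' : (a+2*N) % (4*N) = b ↔ (b = a + 2*N ∨ a = b + 2*N) := by
    rcases Nat.lt_or_ge (a+2*N) (4*N) with h | h
    · rw [Nat.mod_eq_of_lt h]; omega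
    · rw [Nat.mod_eq_sub_mod h, Nat.mod_eq_of_lt (by omega)]; omega
  have hC3 : a % (2*N) = b % (2*N) ↔ (a = b ∨ b = a + 2*N ∨ a = b + 2*N) := by
    rw [mod2N_helper N a ha, mod2N_helper N b hb]
    split_ifs <;> omega
  have hjj : (j = j') ↔ a = b := by
    rw [Fin.ext_iff]
  -- expand everything
  simp only [SAux, hS0, hS1, hS2, hS3, hC1, hC2, hC3, hC3', hjj]
  push_cast
  have hmain : ∀ x y : ℝ, (4*(N:ℝ))*(x + y - l/(N:ℝ)) = 4*N*x + 4*N*y - 4*l := by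
    intro x y; field_simp
  rw [hmain]
  split_ifs <;> first
    | omega
    | ring

lemma eAux_conj (N : ℕ) (t : ℤ) : (starRingEnd ℂ) (eAux N t) = eAux N (-t) := by
  rw [eAux, eAux, ← Complex.exp_conj]
  congr 1
  simp [map_div₀, Complex.conj_I, map_ofNat]
lemma lam_nonneg (N m : ℕ) (hN : 2 ≤ N) (hm1 : 1 ≤ m) (hm : m < 4*N) :
    0 ≤ (1 + Real.cos (Real.pi/(2*N))) + 2 * Real.cos (Real.pi*m/(2*N))
        + (1 - Real.cos (Real.pi/(2*N))) * (-1:ℝ)^m := by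
  have hNpos : (0:ℝ) < N := by positivity
  have h2N : (0:ℝ) < 2*N := by positivity
  have key : ∀ m' : ℕ, 1 ≤ m' → m' ≤ 2*N - 1 →
      Real.cos (Real.pi - Real.pi/(2*N)) ≤ Real.cos (Real.pi*m'/(2*N)) := by
    intro m' h1 h2
    apply Real.cos_le_cos_of_nonneg_of_le_pi
    · positivity
    · have : 0 < Real.pi/(2*N) := by positivity
      linarith
    · have hm' : (m':ℝ) ≤ 2*N - 1 := by
        have : (m':ℝ) ≤ ((2*N - 1 : ℕ):ℝ) := by exact_mod_cast h2
        push_cast [Nat.cast_sub (by omega : 1 ≤ 2*N)] at this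
        linarith
      rw [div_le_iff₀ h2N]
      have hpi := Real.pi_pos
      have hdiv : Real.pi/(2*(N:ℝ)) * (2*N) = Real.pi := div_mul_cancel₀ _ h2N.ne'
      nlinarith
  rcases Nat.even_or_odd m with he | ho
  · rw [Even.neg_one_pow he]
    nlinarith [Real.neg_one_le_cos (Real.pi*m/(2*N))]
  · rw [Odd.neg_one_pow ho]
    suffices h : Real.cos (Real.pi - Real.pi/(2*N)) ≤ Real.cos (Real.pi*m/(2*N)) by
      rw [Real.cos_pi_sub] at h
      linarith
    have hsplit : m ≤ 2*N - 1 ∨ 2*N + 1 ≤ m := by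
      rcases ho with ⟨t, rfl⟩; omega
    rcases hsplit with h1 | h1
    · exact key m hm1 h1
    · have hcast : ((4*N - m : ℕ):ℝ) = 4*N - m := by
        push_cast [Nat.cast_sub (le_of_lt hm)]; ring
      have heq : Real.pi*m/(2*N) = 2*Real.pi - Real.pi*((4*N - m : ℕ):ℝ)/(2*N) := by
        rw [hcast]; field_simp; ring
      rw [heq, Real.cos_two_pi_sub]
      exact key (4*N - m) (by omega) (by omega)

open Matrix in
/-- The matrix `M_N - (l/N) e e^T` is positive semidefinite, where
`M_N = l·A_{C_{4N}} + [[I, fI],[fI, I]]`, `k = cos(π/(2N))`, `f = (1-k)/(1+k)`,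
`l = 1/(1+k)` and `e` is the all-ones vector of length `4N`. -/
theorem MN_minus_rank_one_posSemidef (N : ℕ) (hN : 2 ≤ N) :
    let k : ℝ := Real.cos (Real.pi / (2 * N))
    let f : ℝ := (1 - k) / (1 + k)
    let l : ℝ := 1 / (1 + k)
    -- adjacency matrix of the cycle graph on 4N vertices
    let A : Matrix (Fin (4 * N)) (Fin (4 * N)) ℝ := fun i j =>
      if (i.val + 1) % (4 * N) = j.val ∨ (j.val + 1) % (4 * N) = i.val then 1 else 0
    -- block matrix [[I_{2N}, f I_{2N}],[f I_{2N}, I_{2N}]]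
    let D : Matrix (Fin (4 * N)) (Fin (4 * N)) ℝ := fun i j =>
      if i = j then 1 else if i.val % (2 * N) = j.val % (2 * N) then f else 0
    let M : Matrix (Fin (4 * N)) (Fin (4 * N)) ℝ := l • A + D
    -- all-ones rank one matrix e e^T
    let J : Matrix (Fin (4 * N)) (Fin (4 * N)) ℝ := fun _ _ => 1
    (M - (l / N) • J).PosSemidef := by
  intro k f l A D M J
  have hNR : ((N:ℝ)) ≠ 0 := Nat.cast_ne_zero.2 (by omega)
  have hN2 : (2:ℝ) ≤ (N:ℝ) := by exact_mod_cast hN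
  have hθ1 : 0 < Real.pi / (2*(N:ℝ)) := by positivity
  have hθ2 : Real.pi / (2*(N:ℝ)) < Real.pi/2 := by
    rw [div_lt_div_iff₀ (by positivity) (by norm_num)]
    nlinarith [Real.pi_pos]
  have hk : 0 < k := Real.cos_pos_of_mem_Ioo ⟨by linarith, hθ2⟩
  have hk1 : 0 < 1 + k := by linarith
  have hf : f = 2*l - 1 := by
    show (1-k)/(1+k) = 2*(1/(1+k)) - 1
    field_simp
    ring
  -- entry value of the matrix
  have hMval : ∀ j j' : Fin (4*N), (M - (l / N) • J) j j'
      = l * (if (j.val+1)%(4*N) = j'.val ∨ (j'.val+1)%(4*N) = j.val then 1 else 0)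
        + (if j = j' then 1 else if j.val % (2*N) = j'.val % (2*N) then f else 0) - l/N := by
    intro j j'
    show (l • A + D) j j' - ((l/N) • J) j j' = _
    change l * A j j' + D j j' - (l/N) * 1 = _
    rw [mul_one]
  rw [Matrix.posSemidef_iff_dotProduct_mulVec]
  constructor
  · -- Hermitian
    show Matrix.conjTranspose (M - (l / N) • J) = M - (l / N) • J
    ext i j
    rw [Matrix.conjTranspose_apply, star_trivial, hMval, hMval]
    have h1 : ((j.val+1)%(4*N) = i.val ∨ (i.val+1)%(4*N) = j.val)
        ↔ ((i.val+1)%(4*N) = j.val ∨ (j.val+1)%(4*N) = i.val) := or_comm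
    simp only [h1]
    by_cases h2 : i = j
    · rw [if_pos h2, if_pos h2.symm]
    · simp only [if_neg (Ne.symm h2), if_neg h2,
        show (j.val % (2*N) = i.val % (2*N)) ↔ (i.val % (2*N) = j.val % (2*N)) from eq_comm]
  · intro x
    rw [star_trivial]
    -- quadratic form as double sum
    have hQform : x ⬝ᵥ ((M - (l/N) • J) *ᵥ x)
        = ∑ j : Fin (4*N), ∑ j' : Fin (4*N), x j * x j' * ((M - (l/N) • J) j j') := by
      simp only [dotProduct, Matrix.mulVec, Finset.mul_sum]
      exact Finset.sum_congr rfl fun j _ => Finset.sum_congr rfl fun j' _ => by ring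
    rw [hQform]
    set Qr := ∑ j : Fin (4*N), ∑ j' : Fin (4*N), x j * x j' * ((M - (l/N) • J) j j') with hQr
    -- Fourier vector
    set Y : ℕ → ℂ := fun m => ∑ j : Fin (4*N), ((x j : ℝ):ℂ) * eAux N ((m:ℤ) * (j.val:ℤ)) with hY
    have hμnn : ∀ m ∈ Finset.range (4*N), 0 ≤ muAux N l f m := by
      intro m hm
      rw [muAux]
      split_ifs with h0
      · exact le_refl _
      · have hm4 : m < 4*N := Finset.mem_range.1 hm
        have hang : 2*Real.pi*(m:ℝ)/(4*(N:ℝ)) = Real.pi*m/(2*N) := by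
          field_simp; ring
        have hnum := lam_nonneg N m hN (by omega) hm4
        have heq : 1 + l*(2*Real.cos (Real.pi*m/(2*N))) + f*(-1:ℝ)^m
            = ((1 + Real.cos (Real.pi/(2*N))) + 2*Real.cos (Real.pi*m/(2*N))
                + (1 - Real.cos (Real.pi/(2*N)))*(-1:ℝ)^m)/(1+k) := by
          show 1 + (1/(1+k))*_ + ((1-k)/(1+k))*_ = _
          field_simp
          try ring
        rw [hang, heq]
        exact div_nonneg hnum hk1.le
    -- the key identity
    have entry : ∀ j j' : Fin (4*N), (4*(N:ℂ)) * (((M - (l/N) • J) j j' : ℝ) : ℂ)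
        = ∑ m ∈ Finset.range (4*N), ((muAux N l f m : ℝ):ℂ)
            * eAux N ((m:ℤ) * ((j.val:ℤ) - (j'.val:ℤ))) := by
      intro j j'
      rw [hMval j j', entryA N hN l f _, entryB N hN l f hf j j']
      push_cast
      ring
    have key : (((4*(N:ℝ)) * Qr : ℝ) : ℂ)
        = ∑ m ∈ Finset.range (4*N), ((muAux N l f m : ℝ):ℂ) * (Y m * (starRingEnd ℂ) (Y m)) := by
      calc (((4*(N:ℝ)) * Qr : ℝ) : ℂ)
          = ∑ j : Fin (4*N), ∑ j' : Fin (4*N), ((x j : ℝ):ℂ) * ((x j' : ℝ):ℂ)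
              * ((4*(N:ℂ)) * (((M - (l/N) • J) j j' : ℝ) : ℂ)) := by
            rw [hQr]
            push_cast
            rw [Finset.mul_sum]
            refine Finset.sum_congr rfl fun j _ => ?_
            rw [Finset.mul_sum]
            exact Finset.sum_congr rfl fun j' _ => by ring
        _ = ∑ j : Fin (4*N), ∑ j' : Fin (4*N), ∑ m ∈ Finset.range (4*N),
              ((x j : ℝ):ℂ) * ((x j' : ℝ):ℂ) * (((muAux N l f m : ℝ):ℂ)
                * eAux N ((m:ℤ) * ((j.val:ℤ) - (j'.val:ℤ)))) := by
            refine Finset.sum_congr rfl fun j _ => Finset.sum_congr rfl fun j' _ => ?_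
            rw [entry j j', Finset.mul_sum]
        _ = ∑ j : Fin (4*N), ∑ m ∈ Finset.range (4*N), ∑ j' : Fin (4*N),
              ((x j : ℝ):ℂ) * ((x j' : ℝ):ℂ) * (((muAux N l f m : ℝ):ℂ)
                * eAux N ((m:ℤ) * ((j.val:ℤ) - (j'.val:ℤ)))) :=
            Finset.sum_congr rfl fun j _ => Finset.sum_comm
        _ = ∑ m ∈ Finset.range (4*N), ∑ j : Fin (4*N), ∑ j' : Fin (4*N),
              ((x j : ℝ):ℂ) * ((x j' : ℝ):ℂ) * (((muAux N l f m : ℝ):ℂ)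
                * eAux N ((m:ℤ) * ((j.val:ℤ) - (j'.val:ℤ)))) := Finset.sum_comm
        _ = ∑ m ∈ Finset.range (4*N), ((muAux N l f m : ℝ):ℂ)
              * (Y m * (starRingEnd ℂ) (Y m)) := by
            refine Finset.sum_congr rfl fun m _ => ?_
            have hconj : (starRingEnd ℂ) (Y m)
                = ∑ j' : Fin (4*N), ((x j' : ℝ):ℂ) * eAux N (-((m:ℤ)*(j'.val:ℤ))) := by
              rw [hY]
              rw [map_sum]
              refine Finset.sum_congr rfl fun j' _ => ?_
              rw [_root_.map_mul, Complex.conj_ofReal, eAux_conj]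
            rw [hconj, hY]
            rw [Finset.sum_mul_sum, Finset.mul_sum]
            refine Finset.sum_congr rfl fun j _ => ?_
            rw [Finset.mul_sum]
            refine Finset.sum_congr rfl fun j' _ => ?_
            rw [show ((m:ℤ) * ((j.val:ℤ) - (j'.val:ℤ)))
                = (m:ℤ)*(j.val:ℤ) + -((m:ℤ)*(j'.val:ℤ)) by ring, ← eAux_mul]
            ring
    have keyR : (4*(N:ℝ)) * Qr
        = ∑ m ∈ Finset.range (4*N), muAux N l f m * Complex.normSq (Y m) := by
      have h := key
      simp_rw [Complex.mul_conj] at h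
      exact_mod_cast h
    have hsum_nonneg : 0 ≤ ∑ m ∈ Finset.range (4*N), muAux N l f m * Complex.normSq (Y m) :=
      Finset.sum_nonneg fun m hm => mul_nonneg (hμnn m hm) (Complex.normSq_nonneg _)
    have h4N : (0:ℝ) < 4*(N:ℝ) := by positivity
    nlinarith [keyR ▸ hsum_nonneg]
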